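/- arXiv:2104.14760 — 7 statements merged into one kernel-verified Lean document; each statement's English description precedes it below -/
import Mathlib

section
/- The relation a ≤ b on vertices of a finite simplicial graph Γ defined by lk(a) ⊆ st(b) is transitive: if lk(a) ⊆ st(b) and lk(b) ⊆ st(c), then lk(a) ⊆ st(c). -/
/-- The relations of a right-angled Artin group: commutators of adjacent vertices. -/
def raagRels {V : Type*} (G : SimpleGraph V) : Set (FreeGroup V) :=
  {r | ∃ u v : V, G.Adj u v ∧
    r = FreeGroup.of u * FreeGroup.of v * (FreeGroup.of u)⁻¹ * (FreeGroup.of v)⁻¹}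

/-- The right-angled Artin group of a simplicial graph `G`. -/
abbrev RAAG {V : Type*} (G : SimpleGraph V) := PresentedGroup (raagRels G)

/-- The generator of `RAAG G` corresponding to a vertex. -/
def gen {V : Type*} (G : SimpleGraph V) (v : V) : RAAG G := PresentedGroup.of v

/-- The star of a vertex: the vertex together with its neighbours. -/
def star {V : Type*} (G : SimpleGraph V) (v : V) : Set V := insert v (G.neighborSet v)

/-- `a ≤ b` : the link of `a` is contained in the star of `b`. -/
def LkLeSt {V : Type*} (G : SimpleGraph V) (a b : V) : Prop := G.neighborSet a ⊆ star G b

/-- The complement of the star of `v`. -/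
def stComp {V : Type*} (G : SimpleGraph V) (v : V) : Set V := (star G v)ᶜ

/-- `C` is (the vertex set of) a connected component of `Γ − st(v)`. -/
def IsCompOf {V : Type*} (G : SimpleGraph V) (v : V) (C : Set V) : Prop :=
  ∃ c : (G.induce (stComp G v)).ConnectedComponent, C = Subtype.val '' c.supp

/-- `C` is (the vertex set of) a connected component of `Γ`. -/
def IsGraphComp {V : Type*} (G : SimpleGraph V) (C : Set V) : Prop :=
  ∃ c : G.ConnectedComponent, C = c.supp

/-- `φ` is the right transvection `R_{ab} : a ↦ ab`, fixing all other generators. -/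
def IsRT {V : Type*} {G : SimpleGraph V} (φ : MulAut (RAAG G)) (a b : V) : Prop :=
  φ (gen G a) = gen G a * gen G b ∧ ∀ w ≠ a, φ (gen G w) = gen G w

/-- `φ` is the left transvection `L_{ab} : a ↦ ba`, fixing all other generators. -/
def IsLT {V : Type*} {G : SimpleGraph V} (φ : MulAut (RAAG G)) (a b : V) : Prop :=
  φ (gen G a) = gen G b * gen G a ∧ ∀ w ≠ a, φ (gen G w) = gen G w

/-- `φ` is the partial conjugation `P_v^C`, conjugating every vertex of `C` by `v`
and fixing all other generators. -/
def IsPC {V : Type*} {G : SimpleGraph V} (φ : MulAut (RAAG G)) (v : V) (C : Set V) : Prop :=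
  (∀ w ∈ C, φ (gen G w) = gen G v * gen G w * (gen G v)⁻¹) ∧
  ∀ w ∉ C, φ (gen G w) = gen G w


/-- the relation `lk(a) ⊆ st(b)` on vertices is transitive. -/
theorem statement2 {V : Type*} [Fintype V] [DecidableEq V] (G : SimpleGraph V) (a b c : V)
    (h1 : LkLeSt G a b) (h2 : LkLeSt G b c) : LkLeSt G a c := by
  intro x hx
  have hxa : G.Adj a x := hx
  have hxb := h1 hx
  rcases hxb with rfl | hxb
  · have hab : a ∈ G.neighborSet x := G.adj_symm hxa
    rcases h2 hab with rfl | hac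
    · exact Or.inr hxa
    · have hca : c ∈ G.neighborSet a := G.adj_symm hac
      rcases h1 hca with rfl | hcb
      · exact Or.inl rfl
      · exact Or.inr (G.adj_symm hcb)
  · exact h2 hxb
end

section
/- Let a, b, d be vertices of Γ with a ≤ b and a ≤ d. Then the right transvection R_{ab} (a ↦ ab) and the left transvection L_{ad} (a ↦ da) commute in Aut(A_Γ). -/
/-- if `a ≤ b` and `a ≤ d`, then `R_{ab}` and `L_{ad}` commute in `Aut(A_Γ)`. -/
theorem statement6 {V : Type*} [Fintype V] [DecidableEq V] (G : SimpleGraph V) (a b d : V)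
    (hab : a ≠ b) (had : a ≠ d) (h1 : LkLeSt G a b) (h2 : LkLeSt G a d)
    (R L : MulAut (RAAG G)) (hR : IsRT R a b) (hL : IsLT L a d) :
    R * L = L * R := by
  have key : ∀ v, (R * L) (gen G v) = (L * R) (gen G v) := by
    intro v
    by_cases hv : v = a
    · subst hv
      simp only [MulAut.mul_apply, hR.1, hL.1, map_mul,
        hR.2 d (Ne.symm had), hL.2 b (Ne.symm hab)]
      group
    · simp [MulAut.mul_apply, hR.2 v hv, hL.2 v hv]
  ext x
  have hx : x ∈ Subgroup.closure (Set.range (PresentedGroup.of (rels := raagRels G))) := by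
    rw [PresentedGroup.closure_range_of]; trivial
  induction hx using Subgroup.closure_induction with
  | mem y hy => obtain ⟨v, rfl⟩ := hy; exact key v
  | one => simp
  | mul y z _ _ hy hz => simp [map_mul, hy, hz]
  | inv y _ hy => simp [map_inv, hy]
end

section
/- Let a ≤ b be distinct vertices of Γ and let C be a connected component of Γ − st(b). Then the transvection R_{ab} and the partial conjugation P_b^C commute in Aut(A_Γ). -/
/-- if `a ≤ b` are distinct and `C` is a connected component of `Γ − st(b)`,
then `R_{ab}` and `P_b^C` commute in `Aut(A_Γ)`. -/
theorem statement7 {V : Type*} [Fintype V] [DecidableEq V] (G : SimpleGraph V) (a b : V)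
    (hab : a ≠ b) (hle : LkLeSt G a b) (C : Set V) (hC : IsCompOf G b C)
    (R P : MulAut (RAAG G)) (hR : IsRT R a b) (hP : IsPC P b C) :
    R * P = P * R := by
  -- b ∉ C
  obtain ⟨c, hc⟩ := hC
  have hbC : b ∉ C := by
    intro hb
    rw [hc] at hb
    obtain ⟨⟨x, hx⟩, _, hxx⟩ := hb
    simp only [] at hxx
    rw [hxx] at hx
    exact hx (Set.mem_insert _ _)
  obtain ⟨hRa, hRo⟩ := hR
  obtain ⟨hPc, hPo⟩ := hP
  have key : ∀ v : V, R (P (gen G v)) = P (R (gen G v)) := by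
    intro v
    by_cases hv : v = a
    · subst hv
      by_cases hvC : v ∈ C
      · rw [hPc v hvC, map_mul, map_mul, map_inv, hRa, hRo b hab.symm,
          map_mul, hPc v hvC, hPo b hbC]
        group
      · rw [hPo v hvC, hRa, map_mul, hPo v hvC, hPo b hbC]
    · rw [hRo v hv]
      by_cases hvC : v ∈ C
      · rw [hPc v hvC, map_mul, map_mul, map_inv, hRo b hab.symm, hRo v hv]
      · rw [hPo v hvC, hRo v hv]
  have hhom : ((R * P : MulAut (RAAG G)) : RAAG G →* RAAG G)
      = ((P * R : MulAut (RAAG G)) : RAAG G →* RAAG G) := by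
    apply PresentedGroup.ext
    intro x
    exact key x
  exact MulEquiv.toMonoidHom_injective hhom
end

section
/- Let a and b be adjacent vertices of Γ, and let C be a component of Γ − st(a) and D a component of Γ − st(b). Then the partial conjugations P_a^C and P_b^D commute in Aut(A_Γ). -/

lemma raag_ext {V : Type*} {G : SimpleGraph V} (f g : MulAut (RAAG G))
    (h : ∀ v, f (gen G v) = g (gen G v)) : f = g := by
  apply MulEquiv.toMonoidHom_injective
  apply QuotientGroup.monoidHom_ext
  apply FreeGroup.ext_hom
  intro v
  exact h v

lemma gen_comm {V : Type*} {G : SimpleGraph V} {a b : V} (hadj : G.Adj a b) :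
    gen G a * gen G b = gen G b * gen G a := by
  have hm : (FreeGroup.of a * FreeGroup.of b * (FreeGroup.of a)⁻¹ * (FreeGroup.of b)⁻¹ :
      FreeGroup V) ∈ Subgroup.normalClosure (raagRels G) :=
    Subgroup.subset_normalClosure ⟨a, b, hadj, rfl⟩
  have h1 : (gen G a * gen G b * (gen G a)⁻¹ * (gen G b)⁻¹ : RAAG G) = 1 :=
    (QuotientGroup.eq_one_iff _).mpr hm
  have h2 : gen G a * gen G b * (gen G a)⁻¹ = gen G b := mul_inv_eq_one.mp h1
  exact mul_inv_eq_iff_eq_mul.mp h2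

/-- if `a` and `b` are adjacent, `C` is a component of `Γ − st(a)` and `D` a
component of `Γ − st(b)`, then `P_a^C` and `P_b^D` commute in `Aut(A_Γ)`. -/
theorem statement9 {V : Type*} [Fintype V] [DecidableEq V] (G : SimpleGraph V) (a b : V)
    (hadj : G.Adj a b) (C D : Set V) (hC : IsCompOf G a C) (hD : IsCompOf G b D)
    (P Q : MulAut (RAAG G)) (hP : IsPC P a C) (hQ : IsPC Q b D) :
    P * Q = Q * P := by
  obtain ⟨hP1, hP2⟩ := hP
  obtain ⟨hQ1, hQ2⟩ := hQ
  obtain ⟨c, hCc⟩ := hC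
  obtain ⟨d, hDd⟩ := hD
  have hbC : b ∉ C := by
    rintro hb
    rw [hCc] at hb
    obtain ⟨x, _, rfl⟩ := hb
    exact x.2 (Set.mem_insert_iff.mpr (Or.inr hadj))
  have haD : a ∉ D := by
    rintro ha
    rw [hDd] at ha
    obtain ⟨x, _, rfl⟩ := ha
    exact x.2 (Set.mem_insert_iff.mpr (Or.inr hadj.symm))
  have hQa : Q (gen G a) = gen G a := hQ2 a haD
  have hPb : P (gen G b) = gen G b := hP2 b hbC
  apply raag_ext
  intro w
  show P (Q (gen G w)) = Q (P (gen G w))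
  by_cases hwC : w ∈ C <;> by_cases hwD : w ∈ D
  · simp only [hQ1 w hwD, hP1 w hwC, map_mul, map_inv, hPb, hQa]
    have hc := gen_comm hadj
    rw [show gen G b * (gen G a * gen G w * (gen G a)⁻¹) * (gen G b)⁻¹
        = (gen G b * gen G a) * gen G w * (gen G b * gen G a)⁻¹ by group,
      show gen G a * (gen G b * gen G w * (gen G b)⁻¹) * (gen G a)⁻¹
        = (gen G a * gen G b) * gen G w * (gen G a * gen G b)⁻¹ by group, hc]
  · simp only [hQ2 w hwD, hP1 w hwC, map_mul, map_inv, hQa]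
  · simp only [hQ1 w hwD, hP2 w hwC, map_mul, map_inv, hPb]
  · simp only [hQ2 w hwD, hP2 w hwC]
end

section
/- Let a and b be vertices of Γ, let D be a component of Γ − st(a) and D' a component of Γ − st(b). If D ∩ D' = ∅, b ∉ D, and a ∉ D', then the partial conjugations P_a^D and P_b^{D'} commute in Aut(A_Γ). -/
lemma mulaut_ext_gen {V : Type*} {G : SimpleGraph V} (φ ψ : MulAut (RAAG G))
    (h : ∀ v, φ (gen G v) = ψ (gen G v)) : φ = ψ := by
  have : (φ : RAAG G →* RAAG G) = ψ :=
    MonoidHom.eq_of_eqOn_dense (PresentedGroup.closure_range_of _)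
      (by rintro x ⟨v, rfl⟩; exact h v)
  ext x
  exact DFunLike.congr_fun this x

/-- if `D` is a component of `Γ − st(a)`, `D'` a component of `Γ − st(b)`,
with `D ∩ D' = ∅`, `b ∉ D` and `a ∉ D'`, then `P_a^D` and `P_b^{D'}` commute. -/
theorem statement10 {V : Type*} [Fintype V] [DecidableEq V] (G : SimpleGraph V) (a b : V)
    (D D' : Set V) (hD : IsCompOf G a D) (hD' : IsCompOf G b D')
    (hdisj : D ∩ D' = ∅) (hbD : b ∉ D) (haD' : a ∉ D')
    (P Q : MulAut (RAAG G)) (hP : IsPC P a D) (hQ : IsPC Q b D') :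
    P * Q = Q * P := by
  obtain ⟨hP1, hP2⟩ := hP
  obtain ⟨hQ1, hQ2⟩ := hQ
  apply mulaut_ext_gen
  intro w
  have hnot : ∀ x, x ∈ D → x ∉ D' := fun x hx hx' =>
    Set.eq_empty_iff_forall_notMem.mp hdisj x ⟨hx, hx'⟩
  simp only [MulAut.mul_apply]
  by_cases hw : w ∈ D
  · rw [hQ2 w (hnot w hw), hP1 w hw, map_mul, map_mul, map_inv,
      hQ2 a haD', hQ2 w (hnot w hw)]
  · by_cases hw' : w ∈ D'
    · rw [hQ1 w hw', hP2 w hw, hQ1 w hw', map_mul, map_mul, map_inv,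
        hP2 b hbD, hP2 w hw]
    · rw [hQ2 w hw', hP2 w hw, hQ2 w hw']
end

section
/- Let Γ₁ and Γ₂ be two distinct connected components of Γ, with a ∈ Γ₁ and b ∈ Γ₂, and suppose st(b) ≠ Γ₂, with D a component of Γ₂ − st(b). Then the partial conjugations P_a^{Γ₂} and P_b^D commute in Aut(A_Γ). -/
/-- if `Γ₁`, `Γ₂` are distinct connected components of `Γ`, `a ∈ Γ₁`,
`b ∈ Γ₂`, `st(b) ≠ Γ₂`, and `D` is a component of `Γ₂ − st(b)`, then `P_a^{Γ₂}` and
`P_b^D` commute in `Aut(A_Γ)`. -/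
theorem statement12 {V : Type*} [Fintype V] [DecidableEq V] (G : SimpleGraph V)
    (Γ₁ Γ₂ : Set V) (hΓ₁ : IsGraphComp G Γ₁) (hΓ₂ : IsGraphComp G Γ₂) (hne : Γ₁ ≠ Γ₂)
    (a b : V) (ha : a ∈ Γ₁) (hb : b ∈ Γ₂) (hstb : star G b ≠ Γ₂)
    (D : Set V) (hD : IsCompOf G b D) (hDsub : D ⊆ Γ₂)
    (P Q : MulAut (RAAG G)) (hP : IsPC P a Γ₂) (hQ : IsPC Q b D) :
    P * Q = Q * P := by
  -- `a ∉ Γ₂` since the components are distinct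
  obtain ⟨c₁, rfl⟩ := hΓ₁
  obtain ⟨c₂, rfl⟩ := hΓ₂
  have haΓ₂ : a ∉ c₂.supp := by
    intro h
    exact hne (by rw [show c₁ = c₂ from ha.symm.trans h])
  have haD : a ∉ D := fun h => haΓ₂ (hDsub h)
  -- compute on generators
  have key : ∀ w : V, (P * Q) (gen G w) = (Q * P) (gen G w) := by
    intro w
    simp only [MulAut.mul_apply]
    by_cases hw : w ∈ D
    · simp only [hQ.1 w hw, hP.1 w (hDsub hw), map_mul, map_inv,
        hP.1 b hb, hQ.2 a haD]
      group
    · by_cases hw2 : w ∈ c₂.supp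
      · simp only [hQ.2 w hw, hP.1 w hw2, map_mul, map_inv, hQ.2 a haD]
      · simp only [hQ.2 w hw, hP.2 w hw2]
  -- extend to all of the presented group
  have : (P * Q).toMonoidHom = (Q * P).toMonoidHom := PresentedGroup.ext key
  exact MulEquiv.toMonoidHom_injective this
end

section
/- Let a, b, c be vertices of Γ with a ≤ b ≤ c (i.e. lk(a) ⊆ st(b) and lk(b) ⊆ st(c)) where a, b, c are pairwise distinct. Then the transvections L_{ac} (a ↦ ca) and R_{bc} (b ↦ bc) commute in Aut(A_Γ). -/
/-- if `a, b, c` are pairwise distinct with `a ≤ b ≤ c`, then `L_{ac}` and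
`R_{bc}` commute in `Aut(A_Γ)`. -/
theorem statement19 {V : Type*} [Fintype V] [DecidableEq V] (G : SimpleGraph V) (a b c : V)
    (hab : a ≠ b) (hac : a ≠ c) (hbc : b ≠ c)
    (h1 : LkLeSt G a b) (h2 : LkLeSt G b c)
    (L R : MulAut (RAAG G)) (hL : IsLT L a c) (hR : IsRT R b c) :
    L * R = R * L := by
  obtain ⟨hLa, hLo⟩ := hL
  obtain ⟨hRb, hRo⟩ := hR
  have key : (L.toMonoidHom.comp R.toMonoidHom) = (R.toMonoidHom.comp L.toMonoidHom) := by
    apply PresentedGroup.ext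
    intro x
    simp only [MonoidHom.comp_apply, MulEquiv.coe_toMonoidHom]
    show L (R (gen G x)) = R (L (gen G x))
    by_cases hxa : x = a
    · subst hxa
      rw [hRo x hab, hLa, map_mul, hRo c hbc.symm, hRo x hab]
    · by_cases hxb : x = b
      · subst hxb
        rw [hLo x (Ne.symm hab), hRb, map_mul, hLo x (Ne.symm hab), hLo c hac.symm]
      · rw [hRo x hxb, hLo x hxa, hRo x hxb]
  ext y
  exact DFunLike.congr_fun key y
end
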